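/- arXiv:1607.03787 — 2 statements merged into one kernel-verified Lean document; each statement's English description precedes it below -/
import Mathlib

section
/- Let S be a unital associative ring, σ an injective ring endomorphism of S, δ a left σ-derivation of S, and f ∈ S[t;σ,δ] monic of degree m. If g is a right divisor of f of degree r < m with invertible leading coefficient, then the principal left ideal of the Petit algebra S_f generated by g is a left S-module isomorphic to a submodule of S^m; it is free of rank m − r, i.e., it forms a linear code over S of length m and dimension m − deg(g). -/
/-- A presentation of the skew polynomial ring `S[t;σ,δ]`: a ring `R` together with a
ring homomorphism `C : S →+* R`, a distinguished element `X` (playing the role of `t`)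
satisfying the twisted commutation rule `X * C a = C (σ a) * X + C (δ a)`, and such that
every element of `R` is in a unique way a finite sum `∑ C aᵢ * X ^ i`. -/
structure SkewPolyRing (S : Type*) [Ring S] (σ : S →+* S) (δ : S → S)
    (R : Type*) [Ring R] where
  C : S →+* R
  X : R
  X_mul : ∀ a : S, X * C a = C (σ a) * X + C (δ a)
  coeff : R ≃+ (ℕ →₀ S)
  coeff_symm_apply : ∀ p : ℕ →₀ S, coeff.symm p = p.sum fun i a => C a * X ^ i

namespace SkewPolyRing

variable {S : Type*} [Ring S] {σ : S →+* S} {δ : S → S} {R : Type*} [Ring R]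

/-- The degree of a skew polynomial, with `deg 0 = ⊥`. -/
noncomputable def deg (P : SkewPolyRing S σ δ R) (x : R) : WithBot ℕ :=
  (P.coeff x).support.max

/-- The leading coefficient of a skew polynomial. -/
noncomputable def lcoeff (P : SkewPolyRing S σ δ R) (x : R) : S :=
  P.coeff x ((P.deg x).unbotD 0)

/-- `f` is monic of degree `m`. -/
def Monic (P : SkewPolyRing S σ δ R) (f : R) (m : ℕ) : Prop :=
  P.deg f = (m : WithBot ℕ) ∧ P.coeff f m = 1

open Classical in
/-- The remainder of right division by `f`. -/
noncomputable def modr (P : SkewPolyRing S σ δ R) (f g : R) : R :=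
  if h : ∃ qr : R × R, g = qr.1 * f + qr.2 ∧ P.deg qr.2 < P.deg f then
    (Classical.choose h).2
  else g

/-- The multiplication `x ∘ y = (x * y) mod_r f` of the Petit algebra `S_f`. -/
noncomputable def pmul (P : SkewPolyRing S σ δ R) (f x y : R) : R :=
  P.modr f (x * y)

/-- The element of `S_f` with coefficient vector `c ∈ S^m`. -/
def ofVec (P : SkewPolyRing S σ δ R) {m : ℕ} (c : Fin m → S) : R :=
  ∑ i : Fin m, P.C (c i) * P.X ^ (i : ℕ)

end SkewPolyRing

/-- `δ` is a left `σ`-derivation of `S`. -/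
def IsLeftSigmaDerivation {S : Type*} [Ring S] (σ : S →+* S) (δ : S → S) : Prop :=
  (∀ a b : S, δ (a + b) = δ a + δ b) ∧ ∀ a b : S, δ (a * b) = σ a * δ b + δ a * b

namespace SkewPolyRing

variable {S : Type*} [Ring S] {σ : S →+* S} {δ : S → S} {R : Type*} [Ring R]

/-- `I` is a left ideal of the Petit algebra `S_f` (whose underlying set is
`{x | deg x < m}` with multiplication `pmul f`). -/
def IsLeftIdeal (P : SkewPolyRing S σ δ R) (f : R) (m : ℕ) (I : Set R) : Prop :=
  (∀ x ∈ I, P.deg x < (m : WithBot ℕ)) ∧ (0 : R) ∈ I ∧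
    (∀ x ∈ I, ∀ y ∈ I, x + y ∈ I) ∧ (∀ x ∈ I, -x ∈ I) ∧
    ∀ a : R, P.deg a < (m : WithBot ℕ) → ∀ x ∈ I, P.pmul f a x ∈ I

/-- The set `S_f ∘ g` of left multiples of `g` in the Petit algebra `S_f`:
the principal left ideal generated by `g`. -/
def leftMulSet (P : SkewPolyRing S σ δ R) (f : R) (m : ℕ) (g : R) : Set R :=
  {x : R | ∃ a : R, P.deg a < (m : WithBot ℕ) ∧ x = P.pmul f a g}

end SkewPolyRing


namespace SkewPolyAux

open SkewPolyRing

variable {S : Type*} [Ring S] {σ : S →+* S} {δ : S → S} {R : Type*} [Ring R]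
variable (P : SkewPolyRing S σ δ R)

lemma coeff_e (i : ℕ) (a : S) : P.coeff (P.C a * P.X ^ i) = Finsupp.single i a := by
  have h : P.coeff.symm (Finsupp.single i a) = P.C a * P.X ^ i := by
    rw [P.coeff_symm_apply, Finsupp.sum_single_index]
    simp
  rw [← h, P.coeff.apply_symm_apply]

lemma eq_sum (x : R) : x = (P.coeff x).sum fun i a => P.C a * P.X ^ i := by
  rw [← P.coeff_symm_apply, P.coeff.symm_apply_apply]

lemma eq_zero_of_coeff (x : R) (h : ∀ N, P.coeff x N = 0) : x = 0 :=
  P.coeff.injective (by rw [map_zero]; ext N; exact h N)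

lemma coeff_C_mul (a : S) (z : R) (N : ℕ) :
    P.coeff (P.C a * z) N = a * P.coeff z N := by
  conv_lhs => rw [eq_sum P z]
  rw [Finsupp.mul_sum]
  have h1 : ∀ i b, P.C a * (P.C b * P.X ^ i) = P.C (a * b) * P.X ^ i := by
    intro i b; rw [← mul_assoc, ← map_mul]
  simp_rw [h1]
  rw [map_finsuppSum, Finsupp.sum_apply]
  simp_rw [coeff_e, Finsupp.single_apply]
  rw [Finsupp.sum, Finset.sum_ite_eq']
  by_cases hN : N ∈ (P.coeff z).support
  · rw [if_pos hN]
  · rw [if_neg hN, Finsupp.notMem_support_iff.mp hN, mul_zero]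


lemma iter_one (k : ℕ) : (⇑σ)^[k] (1 : S) = 1 := by
  induction k with
  | zero => rfl
  | succ k ih => rw [Function.iterate_succ_apply, map_one, ih]

lemma iter_isUnit (k : ℕ) {a : S} (h : IsUnit a) : IsUnit ((⇑σ)^[k] a) := by
  induction k generalizing a with
  | zero => exact h
  | succ k ih => rw [Function.iterate_succ_apply]; exact ih (h.map σ)

lemma Xpow_mul (k : ℕ) : ∀ (j : ℕ) (a : S), ∃ w : R,
    (∀ N, k + j ≤ N → P.coeff w N = 0) ∧
    P.X ^ k * (P.C a * P.X ^ j) = P.C ((⇑σ)^[k] a) * P.X ^ (k + j) + w := by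
  induction k with
  | zero =>
    intro j a
    exact ⟨0, by simp, by simp⟩
  | succ k ih =>
    intro j a
    obtain ⟨w₁, hw₁, h1⟩ := ih (j + 1) (σ a)
    obtain ⟨w₂, hw₂, h2⟩ := ih j (δ a)
    refine ⟨w₁ + (P.C ((⇑σ)^[k] (δ a)) * P.X ^ (k + j) + w₂), ?_, ?_⟩
    · intro N hN
      rw [map_add, map_add, Finsupp.add_apply, Finsupp.add_apply, hw₁ N (by omega),
        hw₂ N (by omega), coeff_e, Finsupp.single_apply, if_neg (by omega)]
      simp
    · have hstep : P.X * (P.C a * P.X ^ j)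
          = P.C (σ a) * P.X ^ (j + 1) + P.C (δ a) * P.X ^ j := by
        rw [← mul_assoc, P.X_mul, add_mul, mul_assoc, ← pow_succ']
      have hpow : P.X ^ (k + 1) * (P.C a * P.X ^ j)
          = P.X ^ k * (P.C (σ a) * P.X ^ (j + 1)) + P.X ^ k * (P.C (δ a) * P.X ^ j) := by
        rw [pow_succ, mul_assoc, hstep, mul_add]
      rw [hpow, h1, h2]
      have he : k + (j + 1) = k + 1 + j := by omega
      have hit : (⇑σ)^[k] (σ a) = (⇑σ)^[k + 1] a := by
        rw [Function.iterate_succ_apply]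
      rw [he, hit]
      exact add_assoc _ _ _

lemma coeff_ee (i j N : ℕ) (a b : S) (hN : i + j ≤ N) :
    P.coeff ((P.C a * P.X ^ i) * (P.C b * P.X ^ j)) N =
      if i + j = N then a * (⇑σ)^[i] b else 0 := by
  obtain ⟨w, hw, hXe⟩ := Xpow_mul P i j b
  have hC : P.coeff (P.C a * w) N = 0 := by rw [coeff_C_mul, hw N hN, mul_zero]
  rw [mul_assoc, hXe, mul_add, map_add, Finsupp.add_apply, hC, add_zero, ← mul_assoc,
    ← map_mul, coeff_e, Finsupp.single_apply]

lemma coeff_mul_zero (x y : R) (N : ℕ)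
    (h : ∀ i j, N ≤ i + j → P.coeff x i = 0 ∨ P.coeff y j = 0) :
    P.coeff (x * y) N = 0 := by
  conv_lhs => rw [eq_sum P x, eq_sum P y]
  rw [Finsupp.sum_mul]
  rw [map_finsuppSum, Finsupp.sum_apply]
  apply Finset.sum_eq_zero
  intro i hi
  dsimp only
  rw [Finsupp.mul_sum, map_finsuppSum, Finsupp.sum_apply]
  apply Finset.sum_eq_zero
  intro j hj
  dsimp only
  have hij : i + j < N := by
    by_contra hc
    rcases h i j (by omega) with h0 | h0
    · exact Finsupp.mem_support_iff.mp hi h0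
    · exact Finsupp.mem_support_iff.mp hj h0
  rw [coeff_ee P i j N _ _ (by omega), if_neg (by omega)]

lemma coeff_mul_eq (x y : R) (n p : ℕ)
    (h : ∀ i j, n + p ≤ i + j → ¬(i = n ∧ j = p) → P.coeff x i = 0 ∨ P.coeff y j = 0) :
    P.coeff (x * y) (n + p) = P.coeff x n * (⇑σ)^[n] (P.coeff y p) := by
  have hsplit : x * y = (x - P.C (P.coeff x n) * P.X ^ n) * y
      + (P.C (P.coeff x n) * P.X ^ n) * (y - P.C (P.coeff y p) * P.X ^ p)
      + (P.C (P.coeff x n) * P.X ^ n) * (P.C (P.coeff y p) * P.X ^ p) := by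
    noncomm_ring
  have hc1 : ∀ i, P.coeff (x - P.C (P.coeff x n) * P.X ^ n) i
      = P.coeff x i - Finsupp.single n (P.coeff x n) i := by
    intro i; rw [map_sub, Finsupp.sub_apply, coeff_e]
  have hc2 : ∀ j, P.coeff (y - P.C (P.coeff y p) * P.X ^ p) j
      = P.coeff y j - Finsupp.single p (P.coeff y p) j := by
    intro j; rw [map_sub, Finsupp.sub_apply, coeff_e]
  have h1 : P.coeff ((x - P.C (P.coeff x n) * P.X ^ n) * y) (n + p) = 0 := by
    apply coeff_mul_zero
    intro i j hij
    by_cases hin : i = n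
    · left; rw [hc1, hin, Finsupp.single_apply, if_pos rfl, sub_self]
    · rcases h i j hij (by tauto) with h0 | h0
      · left; rw [hc1, Finsupp.single_apply, if_neg (fun hh => hin hh.symm), h0, sub_zero]
      · right; exact h0
  have h2 : P.coeff ((P.C (P.coeff x n) * P.X ^ n) * (y - P.C (P.coeff y p) * P.X ^ p))
      (n + p) = 0 := by
    apply coeff_mul_zero
    intro i j hij
    by_cases hin : i = n
    · by_cases hjp : j = p
      · right; rw [hc2, hjp, Finsupp.single_apply, if_pos rfl, sub_self]
      · rcases h i j (by omega) (by tauto) with h0 | h0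
        · left; rw [coeff_e, Finsupp.single_apply, hin, if_pos rfl]; rw [hin] at h0; exact h0
        · right; rw [hc2, Finsupp.single_apply, if_neg (fun hh => hjp hh.symm), h0, sub_zero]
    · left; rw [coeff_e, Finsupp.single_apply, if_neg (fun hh => hin hh.symm)]
  have h3 := coeff_ee P n p (n + p) (P.coeff x n) (P.coeff y p) le_rfl
  rw [hsplit]
  simp only [map_add, Finsupp.add_apply]
  rw [h1, h2, h3, if_pos rfl, zero_add, zero_add]

lemma deg_lt_iff (x : R) (d : ℕ) :
    P.deg x < (d : WithBot ℕ) ↔ ∀ N, d ≤ N → P.coeff x N = 0 := by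
  constructor
  · intro h N hN
    by_contra hc
    have hmem : N ∈ (P.coeff x).support := Finsupp.mem_support_iff.mpr hc
    have h2 := (Finset.le_max hmem).trans_lt h
    have h3 : N < d := WithBot.coe_lt_coe.mp h2
    omega
  · intro h
    have hle : (P.coeff x).support.max ≤ (d : WithBot ℕ) := by
      apply Finset.max_le
      intro a ha
      have : a < d := by
        by_contra hc
        exact Finsupp.mem_support_iff.mp ha (h a (by omega))
      exact WithBot.coe_le_coe.mpr this.le
    refine lt_of_le_of_ne hle fun heq => ?_
    have hd : d ∈ (P.coeff x).support := Finset.mem_of_max heq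
    exact Finsupp.mem_support_iff.mp hd (h d le_rfl)

lemma coeff_of_deg_eq {x : R} {d : ℕ} (h : P.deg x = (d : WithBot ℕ)) :
    ∀ N, d < N → P.coeff x N = 0 := by
  intro N hN
  by_contra hc
  have hmem : N ∈ (P.coeff x).support := Finsupp.mem_support_iff.mpr hc
  have h2 := (Finset.le_max hmem).trans_eq h
  have h3 : N ≤ d := WithBot.coe_le_coe.mp h2
  omega

section f
variable {P} {f : R} {m : ℕ} (hf : P.Monic f m)
include hf

lemma coeff_f_hi : ∀ N, m < N → P.coeff f N = 0 := coeff_of_deg_eq P hf.1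

/-- a left multiple of `f` with all coefficients `≥ m` zero is zero -/
lemma mul_f_eq_zero (c : R) (hc : ∀ N, m ≤ N → P.coeff (c * f) N = 0) : c = 0 := by
  by_contra hne
  have hcoeff : P.coeff c ≠ 0 := fun h0 => hne (eq_zero_of_coeff P c (by rw [h0]; simp))
  have hsupp : (P.coeff c).support.Nonempty := Finsupp.support_nonempty_iff.mpr hcoeff
  set d := (P.coeff c).support.max' hsupp with hd
  have hdd : P.coeff (c * f) (d + m) = P.coeff c d * (⇑σ)^[d] (P.coeff f m) := by
    apply coeff_mul_eq
    intro i j hij hne'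
    by_cases hi : d < i
    · left
      by_contra hc0
      exact absurd (Finset.le_max' _ i (Finsupp.mem_support_iff.mpr hc0)) (by omega)
    · right
      exact coeff_f_hi hf j (by omega)
  rw [hf.2, iter_one, mul_one] at hdd
  have := hc (d + m) (by omega)
  rw [hdd] at this
  exact Finsupp.mem_support_iff.mp ((P.coeff c).support.max'_mem hsupp) this

lemma rem_unique (c₁ r₁ c₂ r₂ : R) (heq : c₁ * f + r₁ = c₂ * f + r₂)
    (h1 : ∀ N, m ≤ N → P.coeff r₁ N = 0) (h2 : ∀ N, m ≤ N → P.coeff r₂ N = 0) :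
    r₁ = r₂ := by
  have key : (c₁ - c₂) * f = r₂ - r₁ := by
    rw [sub_mul, sub_eq_sub_iff_add_eq_add, heq]
    exact add_comm _ _
  have hc : c₁ - c₂ = 0 := by
    apply mul_f_eq_zero hf
    intro N hN
    rw [key, map_sub, Finsupp.sub_apply, h1 N hN, h2 N hN, sub_self]
  rw [hc, zero_mul] at key
  exact (sub_eq_zero.mp key.symm).symm

lemma modr_eq (x c rem : R) (hx : x = c * f + rem)
    (hrem : ∀ N, m ≤ N → P.coeff rem N = 0) : P.modr f x = rem := by
  have hex : ∃ qr : R × R, x = qr.1 * f + qr.2 ∧ P.deg qr.2 < P.deg f :=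
    ⟨(c, rem), hx, by rw [hf.1]; exact (deg_lt_iff P rem m).mpr hrem⟩
  rw [modr, dif_pos hex]
  obtain ⟨hspec1, hspec2⟩ := Classical.choose_spec hex
  exact rem_unique hf _ _ _ _ (hspec1.symm.trans hx)
    ((deg_lt_iff P _ m).mp (hspec2.trans_eq hf.1)) hrem

lemma div_exists (n : ℕ) : ∀ x : R, (∀ N, n ≤ N → P.coeff x N = 0) →
    ∃ c rem : R, x = c * f + rem ∧ ∀ N, m ≤ N → P.coeff rem N = 0 := by
  induction n with
  | zero => intro x hx; exact ⟨0, x, by rw [zero_mul, zero_add], fun N _ => hx N (by omega)⟩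
  | succ n ih =>
    intro x hx
    by_cases hnm : n < m
    · exact ⟨0, x, by rw [zero_mul, zero_add], fun N hN => hx N (by omega)⟩
    · push_neg at hnm
      set x' := x - (P.C (P.coeff x n) * P.X ^ (n - m)) * f with hx'
      have hxc : ∀ N, n ≤ N → P.coeff x' N = 0 := by
        intro N hN
        rw [hx', map_sub, Finsupp.sub_apply]
        rcases Nat.lt_or_ge n N with hlt | hge
        · rw [hx N (by omega)]
          have : P.coeff ((P.C (P.coeff x n) * P.X ^ (n - m)) * f) N = 0 := by
            apply coeff_mul_zero
            intro i j hij
            by_cases hi : i = n - m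
            · right; exact coeff_f_hi hf j (by omega)
            · left; rw [coeff_e, Finsupp.single_apply, if_neg (fun hh => hi hh.symm)]
          rw [this, sub_self]
        · have hNn : N = n := by omega
          subst hNn
          have hmul : P.coeff ((P.C (P.coeff x N) * P.X ^ (N - m)) * f) ((N - m) + m)
              = P.coeff (P.C (P.coeff x N) * P.X ^ (N - m)) (N - m)
                * (⇑σ)^[N - m] (P.coeff f m) := by
            apply coeff_mul_eq
            intro i j hij hne
            by_cases hi : i = N - m
            · right; exact coeff_f_hi hf j (by omega)
            · left; rw [coeff_e, Finsupp.single_apply, if_neg (fun hh => hi hh.symm)]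
          rw [coeff_e, Finsupp.single_apply, if_pos rfl, hf.2, iter_one, mul_one] at hmul
          have hNm : N - m + m = N := by omega
          rw [hNm] at hmul
          rw [hmul, sub_self]
      obtain ⟨c', rem, hcr, hrem⟩ := ih x' hxc
      refine ⟨P.C (P.coeff x n) * P.X ^ (n - m) + c', rem, ?_, hrem⟩
      rw [add_mul, add_assoc, ← hcr, hx']
      abel
end f

lemma coeff_ofVec {k : ℕ} (c : Fin k → S) (N : ℕ) :
    P.coeff (P.ofVec c) N = if h : N < k then c ⟨N, h⟩ else 0 := by
  rw [SkewPolyRing.ofVec, map_sum, Finsupp.finset_sum_apply]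
  simp_rw [coeff_e, Finsupp.single_apply]
  by_cases h : N < k
  · rw [dif_pos h, Finset.sum_eq_single (⟨N, h⟩ : Fin k)]
    · simp
    · intro i _ hne
      rw [if_neg (fun hh => hne (Fin.ext hh))]
    · intro hmem; exact absurd (Finset.mem_univ _) hmem
  · rw [dif_neg h]
    apply Finset.sum_eq_zero
    intro i _
    rw [if_neg (by have := i.isLt; omega)]

/-- The linear map sending a coefficient vector `c` to the coefficient vector of
`(ofVec c) * g`. -/
noncomputable def Tmap (P : SkewPolyRing S σ δ R) (g : R) (m r : ℕ) :
    (Fin (m - r) → S) →ₗ[S] (Fin m → S) where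
  toFun c := fun i => P.coeff (P.ofVec c * g) ↑i
  map_add' c c' := by
    have hof : P.ofVec (c + c') = P.ofVec c + P.ofVec c' := by
      rw [SkewPolyRing.ofVec, SkewPolyRing.ofVec, SkewPolyRing.ofVec,
        ← Finset.sum_add_distrib]
      apply Finset.sum_congr rfl
      intro i _
      rw [Pi.add_apply, map_add, add_mul]
    funext i
    rw [hof, add_mul, map_add, Finsupp.add_apply, Pi.add_apply]
  map_smul' s c := by
    have hof : P.ofVec (s • c) = P.C s * P.ofVec c := by
      rw [SkewPolyRing.ofVec, SkewPolyRing.ofVec, Finset.mul_sum]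
      apply Finset.sum_congr rfl
      intro i _
      rw [Pi.smul_apply, smul_eq_mul, map_mul, mul_assoc]
    funext i
    rw [hof, mul_assoc, coeff_C_mul]
    rfl

lemma Tmap_apply (g : R) (m r : ℕ) (c : Fin (m - r) → S) (i : Fin m) :
    Tmap P g m r c i = P.coeff (P.ofVec c * g) ↑i := rfl

end SkewPolyAux

/-- the principal left ideal generated by a right divisor of `f`
is a free code of length `m` and dimension `m - deg g`. Identifying each element
of `S_f` with its coefficient vector in `S^m`, the set of coefficient vectors of
the principal left ideal generated by `g` is an `S`-submodule of `S^m` which is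
free of rank `m - r`. -/
theorem petit_principal_ideal_code {S R : Type*} [Ring S] [Ring R]
    (σ : S →+* S) (hσ : Function.Injective σ)
    (δ : S → S) (hδ : IsLeftSigmaDerivation σ δ)
    (P : SkewPolyRing S σ δ R) (f : R) (m : ℕ) (hf : P.Monic f m)
    (g q : R) (hdiv : f = q * g) (r : ℕ) (hg : P.deg g = (r : WithBot ℕ))
    (hr : r < m) (hlc : IsUnit (P.lcoeff g)) :
    ∃ M : Submodule S (Fin m → S),
      (M : Set (Fin m → S)) =
        (fun x : R => fun i : Fin m => P.coeff x (i : ℕ)) '' P.leftMulSet f m g ∧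
      Nonempty (M ≃ₗ[S] (Fin (m - r) → S)) := by

  classical
  obtain ⟨u, hu0⟩ := hlc
  rw [SkewPolyRing.lcoeff, hg] at hu0
  have hu : (↑u : S) = P.coeff g r := hu0
  have hgr : ∀ N, r < N → P.coeff g N = 0 := SkewPolyAux.coeff_of_deg_eq P hg
  -- products with `g` on the right: vanishing of high coefficients
  have hbzero : ∀ (b : R) (k : ℕ), (∀ N, k ≤ N → P.coeff b N = 0) →
      ∀ N, k + r ≤ N → P.coeff (b * g) N = 0 := by
    intro b k hb N hN
    apply SkewPolyAux.coeff_mul_zero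
    intro i j hij
    by_cases hi : k ≤ i
    · exact Or.inl (hb i hi)
    · exact Or.inr (hgr j (by omega))
  -- recovering degree bounds of `b` from those of `b * g`
  have hbrec : ∀ (b : R) (k : ℕ), (∀ N, k + r ≤ N → P.coeff (b * g) N = 0) →
      ∀ N, k ≤ N → P.coeff b N = 0 := by
    intro b k hbg
    by_contra hc
    push_neg at hc
    obtain ⟨N, hkN, hbN⟩ := hc
    have hbne : P.coeff b ≠ 0 := fun h0 => hbN (by simp [h0])
    have hsupp : (P.coeff b).support.Nonempty := Finsupp.support_nonempty_iff.mpr hbne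
    set d := (P.coeff b).support.max' hsupp with hd
    have hdN : N ≤ d := Finset.le_max' _ N (Finsupp.mem_support_iff.mpr hbN)
    have hlead : P.coeff (b * g) (d + r) = P.coeff b d * (⇑σ)^[d] (P.coeff g r) := by
      apply SkewPolyAux.coeff_mul_eq
      intro i j hij hne'
      by_cases hi : d < i
      · left
        by_contra hc0
        exact absurd (Finset.le_max' _ i (Finsupp.mem_support_iff.mpr hc0)) (by omega)
      · right; exact hgr j (by omega)
    obtain ⟨w, hw⟩ := SkewPolyAux.iter_isUnit d ⟨u, hu⟩
    have hz := hbg (d + r) (by omega)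
    rw [hlead, ← hw] at hz
    have : P.coeff b d = 0 := by
      have h2 : P.coeff b d * ↑w * ↑w⁻¹ = 0 := by rw [hz, zero_mul]
      rwa [mul_assoc, Units.mul_inv, mul_one] at h2
    exact Finsupp.mem_support_iff.mp ((P.coeff b).support.max'_mem hsupp) this
  -- membership in the principal left ideal
  have himg : ∀ c : Fin (m - r) → S, P.ofVec c * g ∈ P.leftMulSet f m g := by
    intro c
    have hcb : ∀ N, m - r ≤ N → P.coeff (P.ofVec c) N = 0 := by
      intro N hN
      rw [SkewPolyAux.coeff_ofVec, dif_neg (by omega)]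
    refine ⟨P.ofVec c, ?_, ?_⟩
    · exact (SkewPolyAux.deg_lt_iff P _ m).mpr fun N hN => hcb N (by omega)
    · exact (SkewPolyAux.modr_eq hf (P.ofVec c * g) 0 _ (by rw [zero_mul, zero_add])
        (fun N hN => hbzero _ (m - r) hcb N (by omega))).symm
  -- injectivity of the linear map
  have hker : ∀ c : Fin (m - r) → S, SkewPolyAux.Tmap P g m r c = 0 → c = 0 := by
    intro c hc
    have hb : ∀ N, P.coeff (P.ofVec c * g) N = 0 := by
      intro N
      by_cases hN : N < m
      · have h2 := congrFun hc ⟨N, hN⟩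
        rwa [SkewPolyAux.Tmap_apply, Pi.zero_apply] at h2
      · refine hbzero _ (m - r) ?_ N (by omega)
        intro N' hN'
        rw [SkewPolyAux.coeff_ofVec, dif_neg (by omega)]
    have hof : P.ofVec c = 0 := SkewPolyAux.eq_zero_of_coeff P _
      (fun N => hbrec (P.ofVec c) 0 (fun N' _ => hb N') N (Nat.zero_le N))
    funext i
    have h3 := SkewPolyAux.coeff_ofVec P c (i : ℕ)
    rw [hof, map_zero, dif_pos i.isLt] at h3
    simpa using h3.symm
  have hTinj : Function.Injective (SkewPolyAux.Tmap P g m r) := by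
    intro c₁ c₂ hcc
    have h0 : SkewPolyAux.Tmap P g m r (c₁ - c₂) = 0 := by rw [map_sub, hcc, sub_self]
    have := hker _ h0
    exact sub_eq_zero.mp this
  refine ⟨LinearMap.range (SkewPolyAux.Tmap P g m r), ?_,
    ⟨(LinearEquiv.ofInjective _ hTinj).symm⟩⟩
  apply Set.eq_of_subset_of_subset
  · rintro v ⟨c, rfl⟩
    exact ⟨P.ofVec c * g, himg c, rfl⟩
  · rintro v ⟨x, ⟨a, hdeg, hx⟩, rfl⟩
    have hda : ∀ N, m ≤ N → P.coeff a N = 0 := (SkewPolyAux.deg_lt_iff P a m).mp hdeg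
    obtain ⟨c, rem, hcr, hrem⟩ := SkewPolyAux.div_exists hf (m + r) (a * g)
      (hbzero a m hda)
    have hxrem : x = rem := by
      rw [hx]
      exact SkewPolyAux.modr_eq hf _ c rem hcr hrem
    have hbg : (a - c * q) * g = rem := by
      rw [sub_mul, mul_assoc, ← hdiv, hcr]
      abel
    have hbdeg : ∀ N, m - r ≤ N → P.coeff (a - c * q) N = 0 := by
      refine hbrec _ (m - r) ?_
      intro N hN
      rw [hbg]
      exact hrem N (by omega)
    refine ⟨fun i => P.coeff (a - c * q) ↑i, ?_⟩
    have hof : P.ofVec (fun i : Fin (m - r) => P.coeff (a - c * q) ↑i) = a - c * q := by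
      apply P.coeff.injective
      ext N
      rw [SkewPolyAux.coeff_ofVec]
      by_cases hN : N < m - r
      · rw [dif_pos hN]
      · rw [dif_neg hN, (hbdeg N (by omega))]
    funext i
    rw [SkewPolyAux.Tmap_apply, hof, hbg, ← hxrem]
end

section
/- Let S be a unital associative ring, σ an injective ring endomorphism of S, δ a left σ-derivation of S, f ∈ S[t;σ,δ] monic, and h = Σ_{i=0}^{r} hᵢtⁱ a monic polynomial lying in the center of S[t;σ,δ] such that f = g·h for some g ∈ S[t;σ,δ]. Let C be the cyclic (f,σ,δ)-code associated with g. Then for a vector c = (c₀,…,c_{m−1}) ∈ S^m with associated polynomial c(t) = Σ_{i=0}^{m−1} cᵢtⁱ, the following are equivalent: (i) (c₀,…,c_{m−1}) ∈ C; (ii) c(t)∘h(t) = 0 in the Petit algebra S_f. -/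
namespace SkewPolyRing

variable {S : Type*} [Ring S] {σ : S →+* S} {δ : S → S} {R : Type*} [Ring R]
variable (P : SkewPolyRing S σ δ R)

lemma aux_cast_lt {a b : ℕ} : (a : WithBot ℕ) < (b : WithBot ℕ) ↔ a < b := by
  rw [Nat.cast_withBot, Nat.cast_withBot]; exact WithBot.coe_lt_coe

lemma aux_cast_inj {a b : ℕ} (h : (a : WithBot ℕ) = (b : WithBot ℕ)) : a = b := by
  rw [Nat.cast_withBot, Nat.cast_withBot] at h
  exact WithBot.coe_injective h

lemma aux_bot_lt (b : ℕ) : (⊥ : WithBot ℕ) < (b : WithBot ℕ) := by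
  rw [Nat.cast_withBot]; exact WithBot.bot_lt_coe b

lemma aux_bot_ne (b : ℕ) : (⊥ : WithBot ℕ) ≠ (b : WithBot ℕ) := by
  rw [Nat.cast_withBot]; exact WithBot.bot_ne_coe

lemma aux_coeff_C_mul_X_pow (a : S) (i : ℕ) :
    P.coeff (P.C a * P.X ^ i) = Finsupp.single i a := by
  have h := P.coeff_symm_apply (Finsupp.single i a)
  rw [Finsupp.sum_single_index (by simp)] at h
  rw [← h, AddEquiv.apply_symm_apply]

lemma aux_eq_sum (x : R) : x = (P.coeff x).sum fun i a => P.C a * P.X ^ i := by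
  conv_lhs => rw [← P.coeff.symm_apply_apply x, P.coeff_symm_apply]

lemma aux_sum1 (p : ℕ →₀ S) (w : ℕ → S → S) (k : ℕ) (hw : w k 0 = 0) :
    (∑ i ∈ p.support, Finsupp.single i (w i (p i)) k) = w k (p k) := by
  classical
  simp only [Finsupp.single_apply]
  rw [Finset.sum_ite_eq' p.support k fun i => w i (p i)]
  by_cases hk : k ∈ p.support
  · rw [if_pos hk]
  · rw [if_neg hk, Finsupp.notMem_support_iff.mp hk, hw]

lemma aux_sum2 (p : ℕ →₀ S) (w : ℕ → S → S) (k : ℕ) (hw : w k 0 = 0) :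
    (∑ i ∈ p.support, Finsupp.single (i + 1) (w i (p i)) (k + 1)) = w k (p k) := by
  classical
  simp only [Finsupp.single_apply, add_left_inj]
  rw [Finset.sum_ite_eq' p.support k fun i => w i (p i)]
  by_cases hk : k ∈ p.support
  · rw [if_pos hk]
  · rw [if_neg hk, Finsupp.notMem_support_iff.mp hk, hw]

lemma aux_sum3 (p : ℕ →₀ S) (w : ℕ → S → S) :
    (∑ i ∈ p.support, Finsupp.single (i + 1) (w i (p i)) 0) = 0 := by
  simp [Finsupp.single_apply]

lemma aux_coeff_C_mul (b : S) (x : R) (k : ℕ) :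
    P.coeff (P.C b * x) k = b * P.coeff x k := by
  conv_lhs => rw [P.aux_eq_sum x]
  rw [Finsupp.mul_sum, map_finsuppSum]
  simp only [← mul_assoc, ← map_mul, aux_coeff_C_mul_X_pow]
  rw [Finsupp.sum_apply, Finsupp.sum]
  exact aux_sum1 _ (fun _ a => b * a) k (mul_zero b)

lemma aux_coeff_X_mul (hd : IsLeftSigmaDerivation σ δ) (x : R) :
    (∀ k, P.coeff (P.X * x) (k + 1) = σ (P.coeff x k) + δ (P.coeff x (k + 1))) ∧
      P.coeff (P.X * x) 0 = δ (P.coeff x 0) := by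
  have hδ0 : δ 0 = 0 := by
    have h0 := hd.1 0 0
    rw [add_zero] at h0
    exact left_eq_add.mp h0
  have key : P.coeff (P.X * x) = (P.coeff x).sum fun i a =>
      (Finsupp.single (i + 1) (σ a) + Finsupp.single i (δ a)) := by
    conv_lhs => rw [P.aux_eq_sum x]
    rw [Finsupp.mul_sum, map_finsuppSum]
    refine Finsupp.sum_congr fun i hi => ?_
    have hterm : P.X * (P.C (P.coeff x i) * P.X ^ i) =
        P.C (σ (P.coeff x i)) * P.X ^ (i + 1) + P.C (δ (P.coeff x i)) * P.X ^ i := by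
      rw [← mul_assoc, P.X_mul, add_mul, mul_assoc, ← pow_succ']
    rw [hterm, map_add, aux_coeff_C_mul_X_pow, aux_coeff_C_mul_X_pow]
  constructor
  · intro k
    rw [key, Finsupp.sum_apply, Finsupp.sum]
    simp only [Finsupp.add_apply]
    rw [Finset.sum_add_distrib,
      aux_sum2 _ (fun _ a => σ a) k (map_zero σ),
      aux_sum1 _ (fun _ a => δ a) (k + 1) hδ0]
  · rw [key, Finsupp.sum_apply, Finsupp.sum]
    simp only [Finsupp.add_apply]
    rw [Finset.sum_add_distrib, aux_sum3 _ (fun _ a => σ a),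
      aux_sum1 _ (fun _ a => δ a) 0 hδ0, zero_add]

lemma aux_X_pow_mul (hd : IsLeftSigmaDerivation σ δ) :
    ∀ (i : ℕ) (x : R) (r : ℕ), (∀ k, r < k → P.coeff x k = 0) →
      (∀ k, i + r < k → P.coeff (P.X ^ i * x) k = 0) ∧
        P.coeff (P.X ^ i * x) (i + r) = σ^[i] (P.coeff x r) := by
  have hδ0 : δ 0 = 0 := by
    have h0 := hd.1 0 0
    rw [add_zero] at h0
    exact left_eq_add.mp h0
  intro i
  induction i with
  | zero =>
    intro x r hx
    constructor
    · intro k hk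
      rw [pow_zero, one_mul]
      exact hx k (by omega)
    · rw [pow_zero, one_mul, zero_add, Function.iterate_zero_apply]
  | succ i ih =>
    intro x r hx
    have hx' : ∀ k, r + 1 < k → P.coeff (P.X * x) k = 0 := by
      intro k hk
      obtain ⟨k', rfl⟩ : ∃ k', k = k' + 1 := ⟨k - 1, by omega⟩
      rw [(P.aux_coeff_X_mul hd x).1 k', hx k' (by omega), hx (k' + 1) (by omega),
        map_zero, hδ0, add_zero]
    have heq : P.X ^ (i + 1) * x = P.X ^ i * (P.X * x) := by rw [pow_succ, mul_assoc]
    obtain ⟨h1, h2⟩ := ih (P.X * x) (r + 1) hx'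
    constructor
    · intro k hk
      rw [heq]
      exact h1 k (by omega)
    · rw [heq, show i + 1 + r = i + (r + 1) by omega, h2,
        (P.aux_coeff_X_mul hd x).1 r, hx (r + 1) (by omega), hδ0, add_zero]
      exact (Function.iterate_succ_apply σ i _).symm

lemma aux_coeff_mul (hd : IsLeftSigmaDerivation σ δ) (x y : R) (n r : ℕ)
    (hx : ∀ k, n < k → P.coeff x k = 0)
    (hy : ∀ k, r < k → P.coeff y k = 0) :
    (∀ k, n + r < k → P.coeff (x * y) k = 0) ∧
      P.coeff (x * y) (n + r) = P.coeff x n * σ^[n] (P.coeff y r) := by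
  have key : ∀ k, P.coeff (x * y) k =
      ∑ i ∈ (P.coeff x).support, P.coeff x i * P.coeff (P.X ^ i * y) k := by
    intro k
    conv_lhs => rw [P.aux_eq_sum x]
    rw [Finsupp.sum_mul, map_finsuppSum, Finsupp.sum_apply, Finsupp.sum]
    refine Finset.sum_congr rfl fun i hi => ?_
    rw [mul_assoc, P.aux_coeff_C_mul]
  constructor
  · intro k hk
    rw [key]
    refine Finset.sum_eq_zero fun i hi => ?_
    by_cases hni : n < i
    · rw [hx i hni, zero_mul]
    · rw [(P.aux_X_pow_mul hd i y r hy).1 k (by omega), mul_zero]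
  · rw [key, Finset.sum_eq_single n
      (fun i hi hin => ?_) (fun hn => ?_)]
    · rw [(P.aux_X_pow_mul hd n y r hy).2]
    · by_cases hni : n < i
      · rw [hx i hni, zero_mul]
      · have : i < n := lt_of_le_of_ne (by omega) hin
        rw [(P.aux_X_pow_mul hd i y r hy).1 (n + r) (by omega), mul_zero]
    · rw [Finsupp.notMem_support_iff.mp hn, zero_mul]

lemma aux_degLt_iff (x : R) (n : ℕ) :
    P.deg x < (n : WithBot ℕ) ↔ ∀ k, n ≤ k → P.coeff x k = 0 := by
  constructor
  · intro hdd k hk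
    by_contra hne
    have hmem := Finset.le_max (Finsupp.mem_support_iff.mpr hne)
    have hlt : (k : WithBot ℕ) < (n : WithBot ℕ) := lt_of_le_of_lt hmem hdd
    exact absurd (aux_cast_lt.mp hlt) (by omega)
  · intro hc
    show (P.coeff x).support.max < (n : WithBot ℕ)
    cases hm : (P.coeff x).support.max with
    | bot => exact aux_bot_lt n
    | coe d =>
      have hmem := Finset.mem_of_max hm
      have hne := Finsupp.mem_support_iff.mp hmem
      have hdn : d < n := by
        by_contra hcon
        exact hne (hc d (by omega))
      rw [Nat.cast_withBot]
      exact WithBot.coe_lt_coe.mpr hdn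

lemma aux_deg_eq (x : R) (d : ℕ) (h1 : ∀ k, d < k → P.coeff x k = 0)
    (h2 : P.coeff x d ≠ 0) : P.deg x = (d : WithBot ℕ) := by
  rw [Nat.cast_withBot]
  apply le_antisymm
  · apply Finset.max_le
    intro a ha
    have hne := Finsupp.mem_support_iff.mp ha
    have had : a ≤ d := by
      by_contra hcon
      exact hne (h1 a (by omega))
    exact WithBot.coe_le_coe.mpr had
  · exact Finset.le_max (Finsupp.mem_support_iff.mpr h2)

lemma aux_deg_zero : P.deg (0 : R) = ⊥ := by
  rw [deg, map_zero]
  simp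

lemma aux_exists_deg (x : R) (hx : x ≠ 0) :
    ∃ d : ℕ, P.deg x = (d : WithBot ℕ) ∧ P.coeff x d ≠ 0 ∧
      ∀ k, d < k → P.coeff x k = 0 := by
  have hne : (P.coeff x).support.Nonempty := by
    rw [Finsupp.support_nonempty_iff]
    intro h0
    exact hx (by rw [← P.coeff.symm_apply_apply x, h0, map_zero])
  obtain ⟨d, hd⟩ := Finset.max_of_nonempty hne
  refine ⟨d, by rw [Nat.cast_withBot]; exact hd,
    Finsupp.mem_support_iff.mp (Finset.mem_of_max hd), fun k hk => ?_⟩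
  by_contra hne'
  have hle := Finset.le_max (Finsupp.mem_support_iff.mpr hne')
  rw [hd] at hle
  exact absurd (WithBot.coe_le_coe.mp hle) (by omega)

lemma aux_deg_facts {x : R} {d : ℕ} (hx : P.deg x = (d : WithBot ℕ)) :
    P.coeff x d ≠ 0 ∧ ∀ k, d < k → P.coeff x k = 0 := by
  have hx0 : x ≠ 0 := by
    intro h0
    rw [h0, P.aux_deg_zero] at hx
    exact aux_bot_ne d hx
  obtain ⟨d', hd', h1, h2⟩ := P.aux_exists_deg x hx0
  have : d' = d := aux_cast_inj (hd' ▸ hx)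
  exact this ▸ ⟨h1, h2⟩

lemma aux_monic_bdd {f : R} {m : ℕ} (hf : P.Monic f m) :
    ∀ k, m < k → P.coeff f k = 0 :=
  (P.aux_deg_facts hf.1).2

lemma aux_mul_monic (hd : IsLeftSigmaDerivation σ δ) {y : R} {r : ℕ}
    (hy : P.Monic y r) (x : R) {d : ℕ} (h1 : ∀ k, d < k → P.coeff x k = 0) :
    (∀ k, d + r < k → P.coeff (x * y) k = 0) ∧
      P.coeff (x * y) (d + r) = P.coeff x d := by
  obtain ⟨hb, he⟩ := P.aux_coeff_mul hd x y d r h1 (P.aux_monic_bdd hy)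
  refine ⟨hb, ?_⟩
  rw [he, hy.2, Function.iterate_fixed (map_one σ) d, mul_one]

lemma aux_deg_mul_monic (hd : IsLeftSigmaDerivation σ δ) {y : R} {r : ℕ}
    (hy : P.Monic y r) {x : R} {d : ℕ} (hxd : P.deg x = (d : WithBot ℕ)) :
    P.deg (x * y) = ((d + r : ℕ) : WithBot ℕ) := by
  obtain ⟨hne, hb⟩ := P.aux_deg_facts hxd
  obtain ⟨hb', he'⟩ := P.aux_mul_monic hd hy x hb
  exact P.aux_deg_eq _ _ hb' (he' ▸ hne)

lemma aux_mul_monic_ne_zero (hd : IsLeftSigmaDerivation σ δ) {y : R} {r : ℕ}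
    (hy : P.Monic y r) {x : R} (hx : x ≠ 0) : x * y ≠ 0 := by
  obtain ⟨d, hdeg, hne, hb⟩ := P.aux_exists_deg x hx
  obtain ⟨_, he⟩ := P.aux_mul_monic hd hy x hb
  intro h0
  rw [h0, map_zero] at he
  exact hne he.symm

lemma aux_deg_mul_lt (hd : IsLeftSigmaDerivation σ δ) {f : R} {m : ℕ}
    (hf : P.Monic f m) {w : R} (hw : P.deg (w * f) < (m : WithBot ℕ)) : w = 0 := by
  by_contra hne
  obtain ⟨d, hdeg, _, _⟩ := P.aux_exists_deg w hne
  have hdd := P.aux_deg_mul_monic hd hf hdeg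
  rw [hdd] at hw
  exact absurd (aux_cast_lt.mp hw) (by omega)

lemma aux_div (hd : IsLeftSigmaDerivation σ δ) {f : R} {m : ℕ} (hf : P.Monic f m)
    (x : R) : ∃ q rem : R, x = q * f + rem ∧ P.deg rem < (m : WithBot ℕ) := by
  have main : ∀ (n : ℕ) (x : R), P.deg x < ((m + n : ℕ) : WithBot ℕ) →
      ∃ q rem : R, x = q * f + rem ∧ P.deg rem < (m : WithBot ℕ) := by
    intro n
    induction n with
    | zero =>
      intro x hx
      exact ⟨0, x, by rw [zero_mul, zero_add], by simpa using hx⟩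
    | succ n ih =>
      intro x hx
      by_cases hlt : P.deg x < ((m + n : ℕ) : WithBot ℕ)
      · exact ih x hlt
      · set a := P.coeff x (m + n) with ha
        have hxb : ∀ k, m + n < k → P.coeff x k = 0 := fun k hk =>
          (P.aux_degLt_iff x (m + n + 1)).mp hx k (by omega)
        have hsingle : ∀ k, n < k → P.coeff (P.C a * P.X ^ n) k = 0 := by
          intro k hk
          rw [aux_coeff_C_mul_X_pow, Finsupp.single_apply, if_neg (by omega)]
        obtain ⟨hb, he⟩ := P.aux_mul_monic hd hf (P.C a * P.X ^ n) hsingle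
        have he' : P.coeff (P.C a * P.X ^ n * f) (m + n) = a := by
          rw [Nat.add_comm m n, he, aux_coeff_C_mul_X_pow, Finsupp.single_apply, if_pos rfl]
        have hx' : P.deg (x - P.C a * P.X ^ n * f) < ((m + n : ℕ) : WithBot ℕ) := by
          rw [aux_degLt_iff]
          intro k hk
          rw [map_sub, Finsupp.sub_apply]
          rcases eq_or_lt_of_le hk with rfl | hk'
          · rw [he', ← ha, sub_self]
          · rw [hxb k hk', hb k (by omega), sub_zero]
        obtain ⟨q, rem, heq, hrem⟩ := ih _ hx'
        refine ⟨q + P.C a * P.X ^ n, rem, ?_, hrem⟩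
        rw [add_mul]
        rw [sub_eq_iff_eq_add] at heq
        rw [heq]
        abel
  rcases hdeg : P.deg x with _ | d
  · refine main 0 x ?_
    rw [hdeg]
    exact aux_bot_lt _
  · refine main (d + 1) x ?_
    rw [hdeg, Nat.cast_withBot]
    exact WithBot.coe_lt_coe.mpr (by omega)

lemma aux_modr_eq (hd : IsLeftSigmaDerivation σ δ) {f : R} {m : ℕ} (hf : P.Monic f m)
    (x q rem : R) (hx : x = q * f + rem) (hr : P.deg rem < (m : WithBot ℕ)) :
    P.modr f x = rem := by
  have hcond : ∃ qr : R × R, x = qr.1 * f + qr.2 ∧ P.deg qr.2 < P.deg f :=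
    ⟨(q, rem), hx, by rw [hf.1]; exact hr⟩
  rw [modr, dif_pos hcond]
  obtain ⟨h1, h2⟩ := Classical.choose_spec hcond
  set q0 := (Classical.choose hcond).1
  set r0 := (Classical.choose hcond).2
  have h2' : P.deg r0 < (m : WithBot ℕ) := by rw [← hf.1]; exact h2
  have heq : q0 * f + r0 = q * f + rem := by rw [← h1, ← hx]
  have hsub : (q0 - q) * f = rem - r0 := by
    rw [sub_mul, sub_eq_sub_iff_add_eq_add, heq, add_comm]
  have hlt : P.deg ((q0 - q) * f) < (m : WithBot ℕ) := by
    rw [hsub, aux_degLt_iff]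
    intro k hk
    rw [map_sub, Finsupp.sub_apply, (P.aux_degLt_iff rem m).mp hr k hk,
      (P.aux_degLt_iff r0 m).mp h2' k hk, sub_zero]
  have h0 := P.aux_deg_mul_lt hd hf hlt
  have hz : rem - r0 = 0 := by rw [← hsub, h0, zero_mul]
  exact (sub_eq_zero.mp hz).symm

lemma aux_deg_ofVec {m : ℕ} (c : Fin m → S) : P.deg (P.ofVec c) < (m : WithBot ℕ) := by
  rw [aux_degLt_iff]
  intro k hk
  rw [ofVec, map_sum, Finset.sum_apply']
  refine Finset.sum_eq_zero fun i _ => ?_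
  have hi := i.isLt
  rw [aux_coeff_C_mul_X_pow, Finsupp.single_apply, if_neg (by omega)]

end SkewPolyRing

/-- parity check polynomial for a cyclic `(f,σ,δ)`-code.
If `f = g·h` with `h` monic and central in `S[t;σ,δ]`, then a vector
`c ∈ S^m` lies in the cyclic `(f,σ,δ)`-code associated with `g` if and only if
`c(t) ∘ h(t) = 0` in the Petit algebra `S_f`. -/
theorem petit_parityCheck {S R : Type*} [Ring S] [Ring R]
    (σ : S →+* S) (hσ : Function.Injective σ)
    (δ : S → S) (hδ : IsLeftSigmaDerivation σ δ)
    (P : SkewPolyRing S σ δ R) (f : R) (m : ℕ) (hf : P.Monic f m)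
    (g h : R) (r : ℕ) (hh : P.Monic h r)
    (hcentral : ∀ x : R, h * x = x * h)
    (hfgh : f = g * h)
    (c : Fin m → S) :
    (P.ofVec c ∈ P.leftMulSet f m g) ↔ P.pmul f (P.ofVec c) h = 0 := by
  classical
  set x := P.ofVec c with hxdef
  have hxdeg : P.deg x < (m : WithBot ℕ) := P.aux_deg_ofVec c
  constructor
  · rintro ⟨a, ha, hxa⟩
    obtain ⟨q, rem, heq, hrem⟩ := P.aux_div hδ hf (a * g)
    have hxr : x = rem := by
      rw [hxa, show P.pmul f a g = P.modr f (a * g) from rfl,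
        P.aux_modr_eq hδ hf (a * g) q rem heq hrem]
    have hxe : x = a * g - q * f := by
      rw [hxr, heq]; abel
    have hmul : x * h = (a - q * h) * f := by
      rw [hxe]
      calc (a * g - q * f) * h = a * (g * h) - q * (f * h) := by
            rw [sub_mul, mul_assoc, mul_assoc]
        _ = a * f - q * (h * f) := by rw [← hfgh, ← hcentral f]
        _ = (a - q * h) * f := by rw [sub_mul, mul_assoc]
    show P.modr f (x * h) = 0
    refine P.aux_modr_eq hδ hf _ (a - q * h) 0 (by rw [hmul, add_zero]) ?_
    rw [P.aux_deg_zero]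
    exact SkewPolyRing.aux_bot_lt m
  · intro h0
    obtain ⟨q, rem, heq, hrem⟩ := P.aux_div hδ hf (x * h)
    have hrem0 : rem = 0 := by
      rw [← P.aux_modr_eq hδ hf (x * h) q rem heq hrem]
      exact h0
    rw [hrem0, add_zero] at heq
    have hqg : x = q * g := by
      have hzz : (x - q * g) * h = 0 := by
        rw [sub_mul, heq, hfgh, ← mul_assoc, sub_self]
      by_contra hne
      exact P.aux_mul_monic_ne_zero hδ hh (sub_ne_zero_of_ne hne) hzz
    have hqdeg : P.deg q < (m : WithBot ℕ) := by
      by_cases hq0 : q = 0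
      · rw [hq0, P.aux_deg_zero]
        exact SkewPolyRing.aux_bot_lt m
      · obtain ⟨dq, hdq, _, _⟩ := P.aux_exists_deg q hq0
        have hx0 : x ≠ 0 := by
          intro h00
          have hdd : P.deg (q * f) = ((dq + m : ℕ) : WithBot ℕ) :=
            P.aux_deg_mul_monic hδ hf hdq
          rw [← heq, h00, zero_mul, P.aux_deg_zero] at hdd
          exact SkewPolyRing.aux_bot_ne _ hdd
        obtain ⟨dx, hdx, _, _⟩ := P.aux_exists_deg x hx0
        have e1 : P.deg (x * h) = ((dx + r : ℕ) : WithBot ℕ) :=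
          P.aux_deg_mul_monic hδ hh hdx
        have e2 : P.deg (q * f) = ((dq + m : ℕ) : WithBot ℕ) :=
          P.aux_deg_mul_monic hδ hf hdq
        rw [heq, e2] at e1
        have e3 : dq + m = dx + r := SkewPolyRing.aux_cast_inj e1
        have e4 : dx < m := by
          rw [hdx] at hxdeg
          exact SkewPolyRing.aux_cast_lt.mp hxdeg
        have hg0 : g ≠ 0 := by
          intro hg
          rw [hg, zero_mul] at hfgh
          have := hf.1
          rw [hfgh, P.aux_deg_zero] at this
          exact SkewPolyRing.aux_bot_ne _ this
        obtain ⟨dg, hdg, _, _⟩ := P.aux_exists_deg g hg0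
        have e5 : P.deg (g * h) = ((dg + r : ℕ) : WithBot ℕ) :=
          P.aux_deg_mul_monic hδ hh hdg
        rw [← hfgh, hf.1] at e5
        have e6 : m = dg + r := SkewPolyRing.aux_cast_inj e5
        rw [hdq]
        exact SkewPolyRing.aux_cast_lt.mpr (by omega)
    exact ⟨q, hqdeg,
      (P.aux_modr_eq hδ hf (q * g) 0 x (by rw [zero_mul, zero_add, hqg]) hxdeg).symm⟩
end
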